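/- arXiv:2410.22384 — 4 statements merged into one kernel-verified Lean document; each statement's English description precedes it below -/
import Mathlib

section
/- For all real x, exp(x²/2)·∫₀ˣ exp(-t²/2) dt = Σ_{k=0}^∞ x^{2k+1}/(2k+1)!!, where the series converges for all x. -/
open Real Nat

noncomputable def dawsonI (x : ℝ) (k : ℕ) : ℝ :=
  ∫ t in (0:ℝ)..x, t ^ (2 * k) * Real.exp (-t ^ 2 / 2)

lemma dawsonI_cont (k : ℕ) : Continuous (fun t : ℝ => t ^ (2 * k) * Real.exp (-t ^ 2 / 2)) := by
  fun_prop

lemma dawsonI_rec (x : ℝ) (k : ℕ) :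
    (2 * k + 1 : ℝ) * dawsonI x k = x ^ (2 * k + 1) * Real.exp (-x ^ 2 / 2) + dawsonI x (k + 1) := by
  have key : ∫ t in (0:ℝ)..x,
      ((2 * k + 1 : ℝ) * (t ^ (2 * k) * Real.exp (-t ^ 2 / 2))
        - t ^ (2 * (k + 1)) * Real.exp (-t ^ 2 / 2))
      = x ^ (2 * k + 1) * Real.exp (-x ^ 2 / 2)
        - (0:ℝ) ^ (2 * k + 1) * Real.exp (-(0:ℝ) ^ 2 / 2) := by
    apply intervalIntegral.integral_eq_sub_of_hasDerivAt
    · intro t _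
      have h1 : HasDerivAt (fun t : ℝ => t ^ (2 * k + 1))
          ((2 * k + 1 : ℝ) * t ^ (2 * k)) t := by
        simpa using hasDerivAt_pow (2 * k + 1) t
      have h2 : HasDerivAt (fun t : ℝ => Real.exp (-t ^ 2 / 2))
          (Real.exp (-t ^ 2 / 2) * (-t)) t := by
        have h3 : HasDerivAt (fun t : ℝ => -t ^ 2 / 2) (-t) t := by
          have := ((hasDerivAt_pow 2 t).fun_neg).div_const 2
          refine this.congr_deriv ?_
          push_cast
          ring
        exact h3.exp
      have := h1.fun_mul h2
      refine this.congr_deriv ?_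
      ring
    · exact ((continuous_const.mul (dawsonI_cont k)).sub (dawsonI_cont (k + 1))).intervalIntegrable _ _
  have hz : ((0:ℝ)) ^ (2 * k + 1) = 0 := zero_pow (by omega)
  rw [intervalIntegral.integral_sub ((by fun_prop : Continuous fun t : ℝ => (2 * k + 1 : ℝ) * (t ^ (2 * k) * Real.exp (-t ^ 2 / 2))).intervalIntegrable _ _)
      ((dawsonI_cont (k + 1)).intervalIntegrable _ _),
    intervalIntegral.integral_const_mul] at key
  rw [hz] at key
  unfold dawsonI
  linarith [key]

lemma dawsonI_bound (x : ℝ) (k : ℕ) : |dawsonI x k| ≤ |x| ^ (2 * k + 1) := by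
  have h : ∀ t ∈ Set.uIoc (0:ℝ) x, ‖t ^ (2 * k) * Real.exp (-t ^ 2 / 2)‖ ≤ |x| ^ (2 * k) := by
    intro t ht
    have habs : |t| ≤ |x| := by
      have h3 := abs_le_max_abs_abs ht.1.le ht.2
      have h4 : max |min (0:ℝ) x| |max (0:ℝ) x| = |x| := by
        rcases le_total 0 x with h | h
        · simp [min_eq_left h, max_eq_right h, abs_of_nonneg h]
        · simp [min_eq_right h, max_eq_left h, abs_nonneg]
      rw [h4] at h3
      exact h3
    have he : Real.exp (-t ^ 2 / 2) ≤ 1 := by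
      rw [Real.exp_le_one_iff]
      nlinarith [sq_nonneg t]
    have he' : (0:ℝ) < Real.exp (-t ^ 2 / 2) := Real.exp_pos _
    rw [norm_mul, norm_pow, Real.norm_eq_abs, Real.norm_eq_abs, abs_of_pos he']
    calc |t| ^ (2 * k) * Real.exp (-t ^ 2 / 2) ≤ |x| ^ (2 * k) * 1 := by
          apply mul_le_mul (pow_le_pow_left₀ (abs_nonneg t) habs _) he he'.le (by positivity)
      _ = |x| ^ (2 * k) := mul_one _
  have := intervalIntegral.norm_integral_le_of_norm_le_const h
  simp only [Real.norm_eq_abs, sub_zero] at this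
  calc |dawsonI x k| ≤ |x| ^ (2 * k) * |x| := this
    _ = |x| ^ (2 * k + 1) := (pow_succ _ _).symm

lemma doubleFact_step (N : ℕ) : ((2 * (N + 1) + 1)‼ : ℕ) = (2 * N + 3) * (2 * N + 1)‼ := by
  have : 2 * (N + 1) + 1 = (2 * N + 1) + 2 := by omega
  rw [this, Nat.doubleFactorial_add_two]

lemma doubleFact_ge (k : ℕ) : (2 ^ k * k.factorial : ℕ) ≤ (2 * k + 1)‼ := by
  induction k with
  | zero => simp
  | succ n ih =>
    rw [doubleFact_step]
    calc 2 ^ (n + 1) * (n + 1).factorial = (2 * (n + 1)) * (2 ^ n * n.factorial) := by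
          rw [Nat.factorial_succ]; ring
      _ ≤ (2 * n + 3) * (2 * n + 1)‼ := by
          apply Nat.mul_le_mul (by omega) ih

lemma doubleFact_pos (n : ℕ) : (0:ℝ) < (n‼ : ℝ) := by
  exact_mod_cast Nat.doubleFactorial_pos n

lemma dawson_telescope (x : ℝ) (N : ℕ) :
    ∑ k ∈ Finset.range (N + 1), x ^ (2 * k + 1) / ((2 * k + 1)‼ : ℝ)
      = Real.exp (x ^ 2 / 2) * dawsonI x 0
        - Real.exp (x ^ 2 / 2) * dawsonI x (N + 1) / ((2 * N + 1)‼ : ℝ) := by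
  have hEe : Real.exp (x ^ 2 / 2) * Real.exp (-x ^ 2 / 2) = 1 := by
    rw [← Real.exp_add]; ring_nf; exact Real.exp_zero
  induction N with
  | zero =>
    have h := dawsonI_rec x 0
    norm_num at h
    norm_num [Finset.sum_range_one, Nat.doubleFactorial]
    linear_combination (-Real.exp (x ^ 2 / 2)) * h + (-x) * hEe
  | succ n ih =>
    rw [Finset.sum_range_succ, ih]
    have h := dawsonI_rec x (n + 1)
    push_cast at h
    have hd : ((2 * (n + 1) + 1)‼ : ℝ) = (2 * (n:ℝ) + 3) * ((2 * n + 1)‼ : ℝ) := by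
      have := doubleFact_step n
      push_cast [this]
      ring
    have hne : ((2 * n + 1)‼ : ℝ) ≠ 0 := (doubleFact_pos _).ne'
    have hne2 : (2 * (n:ℝ) + 3) ≠ 0 := by positivity
    have key : x ^ (2 * (n + 1) + 1) + Real.exp (x ^ 2 / 2) * dawsonI x (n + 1 + 1)
        = (2 * (n:ℝ) + 3) * (Real.exp (x ^ 2 / 2) * dawsonI x (n + 1)) := by
      linear_combination (-Real.exp (x ^ 2 / 2)) * h - x ^ (2 * (n + 1) + 1) * hEe
    have expand : Real.exp (x ^ 2 / 2) * dawsonI x (n + 1) / ((2 * n + 1)‼ : ℝ)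
        = (x ^ (2 * (n + 1) + 1) + Real.exp (x ^ 2 / 2) * dawsonI x (n + 1 + 1))
          / ((2 * (n:ℝ) + 3) * ((2 * n + 1)‼ : ℝ)) := by
      rw [key, mul_div_mul_left _ _ hne2]
    rw [hd, expand]
    ring

lemma dawsonI_zero (x : ℝ) : dawsonI x 0 = ∫ t in (0:ℝ)..x, Real.exp (-t ^ 2 / 2) := by
  unfold dawsonI
  norm_num

lemma dawson_summable (x : ℝ) :
    Summable (fun k : ℕ => x ^ (2 * k + 1) / ((2 * k + 1)‼ : ℝ)) := by
  have hg : Summable (fun k : ℕ => |x| * ((x ^ 2 / 2) ^ k / k.factorial)) :=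
    (Real.summable_pow_div_factorial (x ^ 2 / 2)).mul_left |x|
  apply Summable.of_norm_bounded hg
  intro k
  have hdf : (2 ^ k * k.factorial : ℝ) ≤ ((2 * k + 1)‼ : ℝ) := by
    exact_mod_cast doubleFact_ge k
  calc ‖x ^ (2 * k + 1) / ((2 * k + 1)‼ : ℝ)‖
      = |x| * (x ^ 2) ^ k / ((2 * k + 1)‼ : ℝ) := by
        rw [norm_div, Real.norm_eq_abs, Real.norm_eq_abs, abs_of_pos (doubleFact_pos _),
          abs_pow]
        congr 1
        rw [pow_succ, pow_mul, sq_abs, mul_comm]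
    _ ≤ |x| * (x ^ 2) ^ k / (2 ^ k * k.factorial) := by
        gcongr
    _ = |x| * ((x ^ 2 / 2) ^ k / k.factorial) := by
        rw [div_pow]
        field_simp

lemma dawson_remainder_tendsto (x : ℝ) :
    Filter.Tendsto (fun N : ℕ => Real.exp (x ^ 2 / 2) * dawsonI x (N + 1) / ((2 * N + 1)‼ : ℝ))
      Filter.atTop (nhds 0) := by
  apply squeeze_zero_norm
    (a := fun N : ℕ => (Real.exp (x ^ 2 / 2) * |x| ^ 3) * ((x ^ 2 / 2) ^ N / N.factorial))
  · intro N
    have hb := dawsonI_bound x (N + 1)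
    have hdf : (2 ^ N * N.factorial : ℝ) ≤ ((2 * N + 1)‼ : ℝ) := by
      exact_mod_cast doubleFact_ge N
    have hdfp : (0:ℝ) < ((2 * N + 1)‼ : ℝ) := doubleFact_pos _
    have hE : (0:ℝ) < Real.exp (x ^ 2 / 2) := Real.exp_pos _
    rw [norm_div, norm_mul, Real.norm_eq_abs, Real.norm_eq_abs, Real.norm_eq_abs,
      abs_of_pos hE, abs_of_pos hdfp]
    calc Real.exp (x ^ 2 / 2) * |dawsonI x (N + 1)| / ((2 * N + 1)‼ : ℝ)
        ≤ Real.exp (x ^ 2 / 2) * |x| ^ (2 * (N + 1) + 1) / (2 ^ N * N.factorial) := by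
          gcongr
      _ = (Real.exp (x ^ 2 / 2) * |x| ^ 3) * ((x ^ 2 / 2) ^ N / N.factorial) := by
          have h1 : |x| ^ (2 * (N + 1) + 1) = |x| ^ 3 * (x ^ 2) ^ N := by
            rw [← sq_abs, ← pow_mul, ← pow_add]
            congr 1
            ring
          rw [h1, div_pow]
          field_simp
  · have := (FloorSemiring.tendsto_pow_div_factorial_atTop (x ^ 2 / 2)).const_mul
      (Real.exp (x ^ 2 / 2) * |x| ^ 3)
    simpa using this

theorem dawson_like_series (x : ℝ) :
    HasSum (fun k : ℕ => x ^ (2 * k + 1) / ((2 * k + 1)‼ : ℝ))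
      (Real.exp (x ^ 2 / 2) * ∫ t in (0:ℝ)..x, Real.exp (-t ^ 2 / 2)) := by
  have hsum := dawson_summable x
  have htend : Filter.Tendsto
      (fun N : ℕ => ∑ k ∈ Finset.range (N + 1), x ^ (2 * k + 1) / ((2 * k + 1)‼ : ℝ))
      Filter.atTop (nhds (Real.exp (x ^ 2 / 2) * dawsonI x 0)) := by
    simp_rw [dawson_telescope x]
    have := (dawson_remainder_tendsto x).const_sub (Real.exp (x ^ 2 / 2) * dawsonI x 0)
    simpa using this
  have h0 : Filter.Tendsto
      (fun N : ℕ => ∑ k ∈ Finset.range N, x ^ (2 * k + 1) / ((2 * k + 1)‼ : ℝ))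
      Filter.atTop (nhds (Real.exp (x ^ 2 / 2) * dawsonI x 0)) := by
    rw [← Filter.tendsto_add_atTop_iff_nat 1]
    exact htend
  have h1 := hsum.hasSum
  have h2 := h1.tendsto_sum_nat
  have heq := tendsto_nhds_unique h2 h0
  rw [heq, dawsonI_zero] at h1
  exact h1
end

section
/- For every odd natural number m, ∫₀^π φ²·cosᵐ(φ)·sin(φ) dφ = (π²/(m+1))·(m!!/(m+1)!! − 1). -/
open Real Nat

/-- Even cosine power integral over `[0, π]` (Wallis). -/
lemma cos_pow_even_pi (n : ℕ) :
    (∫ x in (0:ℝ)..π, Real.cos x ^ (2 * n)) =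
      π * ∏ i ∈ Finset.range n, (2 * (i : ℝ) + 1) / (2 * i + 2) := by
  induction' n with k ih
  · simp
  · rw [Finset.prod_range_succ_comm, mul_left_comm, ← ih, Nat.mul_succ, integral_cos_pow]
    simp [Real.sin_pi]
    try push_cast
    try ring

/-- Wallis product in terms of double factorials. -/
lemma wallis_prod_doubleFactorial (k : ℕ) :
    (∏ i ∈ Finset.range (k + 1), (2 * (i : ℝ) + 1) / (2 * i + 2)) =
      ((2 * k + 1)‼ : ℝ) / ((2 * k + 2)‼ : ℝ) := by
  induction' k with k ih
  · norm_num [Nat.doubleFactorial]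
  · rw [Finset.prod_range_succ, ih]
    have h1 : (2 * (k + 1) + 1)‼ = (2 * k + 3) * (2 * k + 1)‼ := by
      have : 2 * (k + 1) + 1 = (2 * k + 1) + 2 := by ring
      rw [this, Nat.doubleFactorial_add_two]
    have h2 : (2 * (k + 1) + 2)‼ = (2 * k + 4) * (2 * k + 2)‼ := by
      have : 2 * (k + 1) + 2 = (2 * k + 2) + 2 := by ring
      rw [this, Nat.doubleFactorial_add_two]
    rw [h1, h2]
    have hne1 : ((2 * k + 2)‼ : ℝ) ≠ 0 := by positivity
    push_cast
    field_simp
    ring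

/-- Symmetry: `∫ x in 0..π, x * cos x ^ (2n) = π/2 * ∫ x in 0..π, cos x ^ (2n)`. -/
lemma lin_cos_pow_even (n : ℕ) :
    (∫ x in (0:ℝ)..π, x * Real.cos x ^ (2 * n)) =
      π / 2 * ∫ x in (0:ℝ)..π, Real.cos x ^ (2 * n) := by
  have h := intervalIntegral.integral_comp_sub_left
    (fun x => x * Real.cos x ^ (2 * n)) π (a := 0) (b := π)
  simp only [sub_self, sub_zero] at h
  have h2 : (∫ x in (0:ℝ)..π, (π - x) * Real.cos (π - x) ^ (2 * n)) =
      ∫ x in (0:ℝ)..π, (π * Real.cos x ^ (2 * n) - x * Real.cos x ^ (2 * n)) := by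
    apply intervalIntegral.integral_congr
    intro x _
    dsimp only
    rw [Real.cos_pi_sub]
    rw [show ((-Real.cos x) ^ (2 * n)) = Real.cos x ^ (2 * n) by
      rw [neg_pow, Even.neg_one_pow ⟨n, by ring⟩, one_mul]]
    ring
  rw [h2] at h
  rw [intervalIntegral.integral_sub
      (by apply Continuous.intervalIntegrable; fun_prop)
      (by apply Continuous.intervalIntegrable; fun_prop),
    intervalIntegral.integral_const_mul] at h
  linarith [h]

theorem J_odd (m : ℕ) (hm : Odd m) :
    ∫ t in (0:ℝ)..π, t ^ 2 * Real.cos t ^ m * Real.sin t =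
      π ^ 2 / (m + 1) * ((m‼ : ℝ) / ((m + 1)‼ : ℝ) - 1) := by
  obtain ⟨k, rfl⟩ := hm
  set m := 2 * k + 1 with hm_def
  have hm1 : (m : ℝ) + 1 ≠ 0 := by positivity
  -- integration by parts
  have hu : ∀ x ∈ Set.uIcc (0:ℝ) π, HasDerivAt (fun y : ℝ => y ^ 2) (2 * x) x := by
    intro x _
    simpa using (hasDerivAt_id x).fun_pow 2
  have hv : ∀ x ∈ Set.uIcc (0:ℝ) π,
      HasDerivAt (fun y : ℝ => -Real.cos y ^ (m + 1) / (m + 1))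
        (Real.cos x ^ m * Real.sin x) x := by
    intro x _
    have h1 : HasDerivAt (fun y : ℝ => Real.cos y ^ (m + 1))
        ((m + 1 : ℕ) * Real.cos x ^ m * (-Real.sin x)) x := by
      simpa using (Real.hasDerivAt_cos x).fun_pow (m + 1)
    have h2 := (h1.fun_neg).div_const ((m : ℝ) + 1)
    convert h2 using 1
    · rfl
    · rfl
    push_cast
    field_simp
  have H := intervalIntegral.integral_mul_deriv_eq_deriv_mul hu hv
    (by apply Continuous.intervalIntegrable; fun_prop)
    (by apply Continuous.intervalIntegrable; fun_prop)
  simp only [mul_assoc] at H ⊢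
  rw [H]
  have hcospow : Real.cos π ^ (m + 1) = 1 := by
    rw [Real.cos_pi, hm_def]
    rw [show 2 * k + 1 + 1 = 2 * (k + 1) by ring, pow_mul]
    norm_num
  have hcos0 : Real.cos (0:ℝ) ^ (m + 1) = 1 := by rw [Real.cos_zero, one_pow]
  -- second integral
  have hI : (∫ x in (0:ℝ)..π, 2 * (x * (-Real.cos x ^ (m + 1) / (m + 1)))) =
      (-2 / (m + 1)) * ∫ x in (0:ℝ)..π, x * Real.cos x ^ (m + 1) := by
    rw [← intervalIntegral.integral_const_mul]
    apply intervalIntegral.integral_congr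
    intro x _
    dsimp only
    ring
  rw [hI]
  have hmm : m + 1 = 2 * (k + 1) := by rw [hm_def]; ring
  rw [hcospow, hcos0, hmm, lin_cos_pow_even, cos_pow_even_pi, wallis_prod_doubleFactorial]
  have h1 : (2 * k + 1)‼ = m‼ := by rw [hm_def]
  have h2 : (2 * k + 2)‼ = (m + 1)‼ := by rw [hm_def]
  have h3 : (2 * (k + 1))‼ = (m + 1)‼ := by
    rw [show 2 * (k + 1) = m + 1 from by omega]
  rw [h1, h2, h3]
  have hne : ((m + 1)‼ : ℝ) ≠ 0 := by positivity
  field_simp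
  ring
end

section
/- For every even natural number m > 0, ∫₀^π φ²·cosᵐ(φ)·sin(φ) dφ = (1/(m+1))·(π² − 4·(m!!/(m+1)!!)·(1 + Σ_{j=0}^{m/2−1} (1/(2^{2j+1}(2j+3)))·C(2j+1, j))), where C(n,k) is the binomial coefficient. -/
open Real Nat intervalIntegral

noncomputable def AA (n : ℕ) : ℝ := ∫ t in (0:ℝ)..π, t * Real.cos t ^ n

lemma intg (n : ℕ) : IntervalIntegrable (fun t => t * Real.cos t ^ n) MeasureTheory.volume 0 π :=
  (by continuity : Continuous fun t : ℝ => t * Real.cos t ^ n).intervalIntegrable _ _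

lemma A_one : AA 1 = -2 := by
  have h : ∀ t ∈ Set.uIcc (0:ℝ) π,
      HasDerivAt (fun t => t * Real.sin t + Real.cos t) (t * Real.cos t ^ 1) t := by
    intro t _
    have h1 := (hasDerivAt_id t).mul (Real.hasDerivAt_sin t)
    have h2 := Real.hasDerivAt_cos t
    refine (h1.add h2).congr_deriv ?_
    simp
  rw [AA, integral_eq_sub_of_hasDerivAt h (intg 1)]
  norm_num

lemma A_rec (k : ℕ) :
    (2*k+3 : ℝ) * AA (2*k+3) = (2*k+2) * AA (2*k+1) - 2 / (2*k+3) := by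
  have h : ∀ t ∈ Set.uIcc (0:ℝ) π,
      HasDerivAt (fun t => t * Real.cos t ^ (2*k+2) * Real.sin t + Real.cos t ^ (2*k+3) / (2*k+3))
        ((2*k+3) * (t * Real.cos t ^ (2*k+3)) - (2*k+2) * (t * Real.cos t ^ (2*k+1))) t := by
    intro t _
    have hc := Real.hasDerivAt_cos t
    have hs := Real.hasDerivAt_sin t
    have h1 : HasDerivAt (fun t : ℝ => t * Real.cos t ^ (2*k+2) * Real.sin t)
        ((1 * Real.cos t ^ (2*k+2) +
          t * ((2*k+2 : ℕ) * Real.cos t ^ (2*k+1) * (-Real.sin t))) * Real.sin t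
          + t * Real.cos t ^ (2*k+2) * Real.cos t) t :=
      ((hasDerivAt_id t).mul (hc.pow _)).mul hs
    have h2 : HasDerivAt (fun t : ℝ => Real.cos t ^ (2*k+3) / (2*k+3))
        (((2*k+3 : ℕ) * Real.cos t ^ (2*k+2) * (-Real.sin t)) / (2*k+3)) t :=
      (hc.pow _).div_const _
    refine (h1.add h2).congr_deriv ?_
    symm
    have hpos : (2*(k:ℝ)+3) ≠ 0 := by positivity
    have hsc := Real.sin_sq_add_cos_sq t
    push_cast
    field_simp
    linear_combination ((2*(k:ℝ)+2) * t * Real.cos t ^ (2*k+1)) * hsc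
  have hI := integral_eq_sub_of_hasDerivAt h
    (((intg (2*k+3)).const_mul ((2*k+3:ℝ))).sub ((intg (2*k+1)).const_mul ((2*k+2:ℝ))))
  rw [integral_sub ((intg (2*k+3)).const_mul _) ((intg (2*k+1)).const_mul _),
    integral_const_mul, integral_const_mul, ← AA, ← AA] at hI
  have e1 : (-1:ℝ)^(2*k+3) = -1 := Odd.neg_one_pow ⟨k+1, by ring⟩
  rw [Real.cos_pi, Real.sin_pi, Real.cos_zero, Real.sin_zero, e1, one_pow] at hI
  simp only [one_pow, mul_zero, zero_mul, zero_add] at hI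
  linear_combination hI

lemma key (k : ℕ) : (2*k+2)‼ * (2*k+1).choose k = 2^(2*k+1) * (2*k+1)‼ := by
  have hd : 0 < (2*k+2)‼ := Nat.doubleFactorial_pos _
  apply Nat.eq_of_mul_eq_mul_right hd
  have h1 : (2*k+2)‼ = 2^(k+1) * (k+1)! := by
    have := Nat.doubleFactorial_two_mul (k+1)
    rw [show 2*(k+1) = 2*k+2 by ring] at this
    exact this
  have h2 : (2*k+1)‼ * (2*k+2)‼ = (2*k+2)! := by
    have := Nat.factorial_eq_mul_doubleFactorial (2*k+1)
    rw [show 2*k+1+1 = 2*k+2 by ring] at this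
    rw [this, Nat.mul_comm]
  have h3 : 2 * (2*k+1).choose k = (2*k+2).choose (k+1) := by
    have h5 : (2*k+2).choose (k+1) = (2*k+1).choose k + (2*k+1).choose (k+1) :=
      Nat.choose_succ_succ (2*k+1) k
    have h := Nat.choose_symm_half k
    omega
  have h4 : (2*k+2).choose (k+1) * (k+1)! * (k+1)! = (2*k+2)! := by
    have := Nat.choose_mul_factorial_mul_factorial (show k+1 ≤ 2*k+2 by omega)
    rw [show 2*k+2-(k+1) = k+1 by omega] at this
    exact this
  calc (2*k+2)‼ * (2*k+1).choose k * (2*k+2)‼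
      = 2^(2*k+1) * ((2*k+2).choose (k+1) * (k+1)! * (k+1)!) := by
        rw [h1, ← h3]; ring
    _ = 2^(2*k+1) * (2*k+1)‼ * (2*k+2)‼ := by rw [h4, ← h2]; ring

lemma A_formula (k : ℕ) :
    AA (2*k+1) = -2 * (((2*k)‼ : ℝ) / ((2*k+1)‼ : ℝ)) *
      (1 + ∑ j ∈ Finset.range k,
        1 / (2 ^ (2*j+1) * (2*j+3) : ℝ) * ((2*j+1).choose j : ℝ)) := by
  induction k with
  | zero => simpa [Nat.doubleFactorial] using A_one
  | succ k ih =>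
    have hrec := A_rec k
    rw [ih] at hrec
    have hkey : ((2*k+2)‼ : ℝ) * ((2*k+1).choose k : ℝ) = 2^(2*k+1) * ((2*k+1)‼ : ℝ) := by
      exact_mod_cast congrArg (fun n : ℕ => (n : ℝ)) (key k)
    have hd1 : ((2*(k+1))‼ : ℝ) = (2*k+2) * ((2*k)‼ : ℝ) := by
      rw [show 2*(k+1) = 2*k+2 by ring, Nat.doubleFactorial_add_two]; push_cast; ring
    have hd1' : ((2*k+2)‼ : ℝ) = (2*k+2) * ((2*k)‼ : ℝ) := by
      rw [Nat.doubleFactorial_add_two]; push_cast; ring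
    have hd2 : ((2*(k+1)+1)‼ : ℝ) = (2*k+3) * ((2*k+1)‼ : ℝ) := by
      rw [show 2*(k+1)+1 = (2*k+1)+2 by ring, Nat.doubleFactorial_add_two]; push_cast; ring
    rw [show 2*(k+1)+1 = 2*k+3 by ring] at *
    rw [hd1, hd2, Finset.sum_range_succ]
    have hb : ((2*k+1)‼ : ℝ) ≠ 0 := by positivity
    have h3 : (2*(k:ℝ)+3) ≠ 0 := by positivity
    have hp : (2:ℝ)^(2*k+1) ≠ 0 := by positivity
    rw [hd1'] at hkey
    field_simp at hrec ⊢
    linear_combination (2 * (2:ℝ)^(k*2)) * hrec + 2 * hkey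

theorem J_even (m : ℕ) (hm : Even m) (hm0 : 0 < m) :
    ∫ t in (0:ℝ)..π, t ^ 2 * Real.cos t ^ m * Real.sin t =
      1 / (m + 1) *
        (π ^ 2 - 4 * ((m‼ : ℝ) / ((m + 1)‼ : ℝ)) *
          (1 + ∑ j ∈ Finset.range (m / 2),
            1 / (2 ^ (2 * j + 1) * (2 * j + 3) : ℝ) * ((2 * j + 1).choose j : ℝ))) := by
  obtain ⟨k, rfl⟩ := hm
  have h2k : k + k = 2 * k := by ring
  rw [h2k]
  have hm1 : (2*(k:ℝ)+1) ≠ 0 := by positivity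
  -- integration by parts
  have h : ∀ t ∈ Set.uIcc (0:ℝ) π,
      HasDerivAt (fun t => -(t^2 * Real.cos t ^ (2*k+1)) / (2*(k:ℝ)+1))
        (t ^ 2 * Real.cos t ^ (2*k) * Real.sin t
          - 2/(2*(k:ℝ)+1) * (t * Real.cos t ^ (2*k+1))) t := by
    intro t _
    have hc := Real.hasDerivAt_cos t
    have h1 : HasDerivAt (fun t : ℝ => -(t^2 * Real.cos t ^ (2*k+1)) / (2*(k:ℝ)+1))
        (-((2:ℕ) * t^(1:ℕ) * 1 * Real.cos t ^ (2*k+1)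
          + t^2 * ((2*k+1 : ℕ) * Real.cos t ^ (2*k) * (-Real.sin t))) / (2*(k:ℝ)+1)) t := by
      exact ((((hasDerivAt_id t).pow 2).mul (hc.pow _)).neg).div_const _
    refine h1.congr_deriv ?_
    symm
    push_cast
    field_simp
    ring
  have hint1 : IntervalIntegrable (fun t : ℝ => t ^ 2 * Real.cos t ^ (2*k) * Real.sin t)
      MeasureTheory.volume 0 π :=
    (by continuity : Continuous fun t : ℝ => t ^ 2 * Real.cos t ^ (2*k) * Real.sin t).intervalIntegrable _ _
  have hI := integral_eq_sub_of_hasDerivAt h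
    (hint1.sub ((intg (2*k+1)).const_mul (2/(2*(k:ℝ)+1))))
  rw [integral_sub hint1 ((intg (2*k+1)).const_mul _), integral_const_mul, ← AA] at hI
  have e1 : (Real.cos π)^(2*k+1) = -1 := by
    rw [Real.cos_pi]; exact Odd.neg_one_pow ⟨k, by ring⟩
  rw [e1] at hI
  simp only [Real.cos_zero, one_pow, ne_eq, OfNat.ofNat_ne_zero, not_false_eq_true,
    zero_pow, zero_mul, mul_zero, neg_zero, zero_div, sub_zero, mul_neg, mul_one, neg_neg] at hI
  have hA := A_formula k
  rw [hA] at hI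
  have hsimp : (2*k).succ‼ = (2*k+1)‼ := rfl
  rw [show 2*k/2 = k from Nat.mul_div_cancel_left k (by norm_num)]
  push_cast at hI ⊢
  linear_combination hI
end

section
/- For every odd natural number k ≥ 3, the central-type binomial coefficient satisfies C(k+2, (k+1)/2) ≤ √(2/π)·2^{k+2}/√(k+2). -/
open Real Filter Topology

noncomputable def cb (n : ℕ) : ℝ := (Nat.centralBinom n : ℝ) * Real.sqrt n / 4 ^ n

lemma cb_eq (n : ℕ) (hn : n ≠ 0) :
    cb n = Stirling.stirlingSeq (2 * n) / Stirling.stirlingSeq n ^ 2 := by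
  have hfac : ((2 * n).factorial : ℝ) =
      (Nat.centralBinom n : ℝ) * n.factorial * n.factorial := by
    have := Nat.choose_mul_factorial_mul_factorial (Nat.le_mul_of_pos_left n two_pos)
    rw [Nat.centralBinom]
    have h2 : 2 * n - n = n := by omega
    rw [h2] at this
    exact_mod_cast this.symm
  have hn' : (0:ℝ) < n := by positivity
  set s := Real.sqrt n with hs
  have hs2 : s ^ 2 = n := Real.sq_sqrt hn'.le
  have hspos : 0 < s := Real.sqrt_pos.mpr hn'
  have h4 : Real.sqrt (2 * ((2 * n : ℕ) : ℝ)) = 2 * s := by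
    push_cast
    rw [show (2 : ℝ) * (2 * n) = 2 ^ 2 * n by ring, Real.sqrt_mul (by positivity),
      Real.sqrt_sq (by norm_num)]
  have h2n : Real.sqrt (2 * (n : ℝ)) = Real.sqrt 2 * s := by
    rw [Real.sqrt_mul (by norm_num)]
  have hsq2 : Real.sqrt 2 ^ 2 = 2 := Real.sq_sqrt (by norm_num)
  unfold Stirling.stirlingSeq cb
  rw [hfac, h4, h2n]
  have hfpos : (0:ℝ) < n.factorial := by positivity
  have hepos : (0:ℝ) < Real.exp 1 := Real.exp_pos 1
  push_cast
  rw [show ((2:ℝ) * (n:ℝ) / Real.exp 1) ^ (2*n) = 4 ^ n * ((n:ℝ) / Real.exp 1) ^ (2*n) by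
    rw [mul_div_assoc, mul_pow, pow_mul]; norm_num]
  rw [show ((n:ℝ)/Real.exp 1) ^ (2*n) = (((n:ℝ)/Real.exp 1) ^ n)^2 by rw [← pow_mul]; ring_nf]
  have hx : (0:ℝ) < (n:ℝ) ^ n / Real.exp 1 ^ n := by positivity
  have h2 : (0:ℝ) < Real.sqrt 2 := by positivity
  rw [← hs]
  field_simp
  linear_combination (-(↑n.centralBinom:ℝ)) * hsq2

lemma cb_mono : Monotone cb := by
  apply monotone_nat_of_le_succ
  intro n
  have hsq : Real.sqrt n * Real.sqrt n = n := Real.mul_self_sqrt (by positivity)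
  have hsq1 : Real.sqrt (n+1) * Real.sqrt (n+1) = (n:ℝ)+1 := by
    have := Real.mul_self_sqrt (show (0:ℝ) ≤ (n:ℝ)+1 by positivity)
    push_cast at this ⊢; linarith [this]
  have key : 2 * Real.sqrt n * ((n:ℝ)+1) ≤ (2*(n:ℝ)+1) * Real.sqrt ((n:ℝ)+1) := by
    have h0 : (0:ℝ) ≤ Real.sqrt n := Real.sqrt_nonneg _
    have h1 : (0:ℝ) ≤ Real.sqrt ((n:ℝ)+1) := Real.sqrt_nonneg _
    apply le_of_pow_le_pow_left₀ two_ne_zero (by positivity)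
    have e1 : (2 * Real.sqrt n * ((n:ℝ)+1))^2 = 4 * ((n:ℝ)) * ((n:ℝ)+1)^2 := by
      push_cast at hsq; nlinarith [hsq]
    have e2 : ((2*(n:ℝ)+1) * Real.sqrt ((n:ℝ)+1))^2 = (2*(n:ℝ)+1)^2 * ((n:ℝ)+1) := by
      nlinarith [hsq1]
    rw [e1, e2]; nlinarith [sq_nonneg ((n:ℝ))]
  have hrec : ((n:ℝ)+1) * (Nat.centralBinom (n+1) : ℝ)
      = 2 * (2*(n:ℝ)+1) * (Nat.centralBinom n : ℝ) := by
    have := Nat.succ_mul_centralBinom_succ n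
    exact_mod_cast congrArg (Nat.cast : ℕ → ℝ) this
  unfold cb
  rw [div_le_div_iff₀ (by positivity) (by positivity)]
  have hcpos : (0:ℝ) ≤ (Nat.centralBinom n : ℝ) := by positivity
  have h1 : (Nat.centralBinom n : ℝ) * 4^n * (2 * Real.sqrt n * ((n:ℝ)+1))
      ≤ (Nat.centralBinom n : ℝ) * 4^n * ((2*(n:ℝ)+1) * Real.sqrt ((n:ℝ)+1)) :=
    mul_le_mul_of_nonneg_left key (by positivity)
  have hmul : (0:ℝ) < (n:ℝ)+1 := by positivity
  rw [← mul_le_mul_iff_of_pos_right hmul]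
  have h2 : (Nat.centralBinom (n+1):ℝ) * Real.sqrt ((n:ℝ)+1) * 4^n * ((n:ℝ)+1)
      = 2*(2*(n:ℝ)+1)*(Nat.centralBinom n:ℝ)*(Real.sqrt ((n:ℝ)+1)*4^n) := by
    linear_combination (Real.sqrt ((n:ℝ)+1)*4^n) * hrec
  push_cast
  rw [pow_succ]
  push_cast at h2
  nlinarith [h1, h2]

lemma cb_tendsto : Filter.Tendsto cb Filter.atTop (𝓝 (1 / Real.sqrt π)) := by
  have hπ : (0:ℝ) < π := Real.pi_pos
  have hsp : Real.sqrt π ≠ 0 := by positivity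
  have h2 : Filter.Tendsto (fun n : ℕ => Stirling.stirlingSeq (2*n)) Filter.atTop (𝓝 (Real.sqrt π)) :=
    Stirling.tendsto_stirlingSeq_sqrt_pi.comp (Filter.tendsto_id.const_mul_atTop' two_pos)
  have h3 : Filter.Tendsto (fun n : ℕ => Stirling.stirlingSeq n ^ 2) Filter.atTop
      (𝓝 (Real.sqrt π ^ 2)) := Stirling.tendsto_stirlingSeq_sqrt_pi.pow 2
  have h4 := h2.div h3 (by positivity)
  have heq : Real.sqrt π / Real.sqrt π ^ 2 = 1 / Real.sqrt π := by
    rw [sq]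
    field_simp
  rw [heq] at h4
  exact Filter.Tendsto.congr'
    (Filter.eventually_atTop.mpr ⟨1, fun n hn => (cb_eq n (by omega)).symm⟩) h4

lemma cb_le (n : ℕ) : cb n ≤ 1 / Real.sqrt π := cb_mono.ge_of_tendsto cb_tendsto n

theorem central_binom_upper_bound (k : ℕ) (hk : Odd k) (hk3 : 3 ≤ k) :
    ((k + 2).choose ((k + 1) / 2) : ℝ) ≤
      Real.sqrt (2 / π) * 2 ^ (k + 2) / Real.sqrt (k + 2) := by
  obtain ⟨m, hm0⟩ := hk
  have hm : k = 2*m+1 := by omega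
  have hm1 : 1 ≤ m := by omega
  -- step 1 : 2 * choose = centralBinom (m+2)
  have hchoose : 2 * ((k+2).choose ((k+1)/2)) = Nat.centralBinom (m+2) := by
    have hd : (k+1)/2 = m+1 := by omega
    have hk2 : k+2 = 2*m+3 := by omega
    rw [hd, hk2, Nat.centralBinom]
    have hsy := Nat.choose_symm (n := 2*m+3) (k := m+2) (by omega)
    rw [show 2*m+3-(m+2) = m+1 by omega] at hsy
    have hps : (2*(m+2)).choose (m+2) = (2*m+3).choose (m+1) + (2*m+3).choose (m+2) := by
      rw [show 2*(m+2) = (2*m+3)+1 by ring]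
      exact Nat.choose_succ_succ (2*m+3) (m+1)
    rw [hps, ← hsy, two_mul]
  have hπ : (0:ℝ) < π := Real.pi_pos
  set sπ := Real.sqrt π with hsπ
  have hsπpos : 0 < sπ := Real.sqrt_pos.mpr hπ
  set s := Real.sqrt ((m:ℝ)+2) with hsdef
  have hspos : 0 < s := Real.sqrt_pos.mpr (by positivity)
  set C := (Nat.centralBinom (m+2) : ℝ) with hCdef
  have hCpos : (0:ℝ) < C := by rw [hCdef]; exact_mod_cast Nat.centralBinom_pos (m+2)
  -- step 2 : C ≤ 4^(m+2) / (sπ * s)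
  have hC := cb_le (m+2)
  unfold cb at hC
  rw [show ((m+2:ℕ):ℝ) = (m:ℝ)+2 by push_cast; ring] at hC
  rw [div_le_div_iff₀ (by positivity) (by positivity)] at hC
  have hCb : C ≤ 4^(m+2)/(sπ*s) := by
    rw [le_div_iff₀ (by positivity)]
    nlinarith [hC]
  -- step 3 : cast
  have hcast : ((k + 2).choose ((k + 1) / 2) : ℝ) = C/2 := by
    rw [eq_div_iff (two_ne_zero (α:=ℝ)), hCdef]
    exact_mod_cast (show ((k+2).choose ((k+1)/2))*2 = Nat.centralBinom (m+2) by omega)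
  have h4 : (4:ℝ)^(m+2) = 2 * 2^(k+2) := by
    rw [show (4:ℝ) = 2^2 by norm_num, ← pow_mul, show 2*(m+2) = (k+2)+1 by omega, pow_succ]
    ring
  have hk2r : ((k:ℝ)+2) = 2*(m:ℝ)+3 := by rw [hm]; push_cast; ring
  have hss : Real.sqrt (2*(m:ℝ)+3) ≤ Real.sqrt 2 * s := by
    rw [hsdef, ← Real.sqrt_mul (by norm_num)]
    exact Real.sqrt_le_sqrt (by linarith)
  have hs2pos : (0:ℝ) < Real.sqrt (2*(m:ℝ)+3) := Real.sqrt_pos.mpr (by positivity)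
  have hsqdiv : Real.sqrt (2/π) = Real.sqrt 2 / sπ := Real.sqrt_div (by norm_num) π
  calc ((k + 2).choose ((k + 1) / 2) : ℝ) = C/2 := hcast
    _ ≤ (4^(m+2)/(sπ*s))/2 := by linarith
    _ = 2^(k+2)/(sπ*s) := by rw [h4]; ring
    _ ≤ Real.sqrt 2 * 2^(k+2) / (sπ * Real.sqrt (2*(m:ℝ)+3)) := by
        rw [div_le_div_iff₀ (by positivity) (by positivity)]
        have hmm := mul_le_mul_of_nonneg_left hss (show (0:ℝ) ≤ sπ * 2^(k+2) by positivity)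
        nlinarith [hmm]
    _ = Real.sqrt (2/π) * 2 ^ (k + 2) / Real.sqrt ((k:ℝ) + 2) := by
        rw [hsqdiv, hk2r]; ring
end
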